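/- Let p be an odd prime number and let G be a group of order p^5 generated by f1, f2, f0, h1, h2 with Z(G) = ⟨h1, h2⟩ and relations [f1,f2] = f0, [f0,f1] = h1, [f0,f2] = h2, f0^p = h1^p = h2^p = 1, and such that f1^p ∈ ⟨h1, h2⟩ and f2^p ∈ ⟨h1, h2⟩ (i.e., G belongs to the isoclinism family Φ_6). Then B_0(G) = 0. -/

import Mathlib

/-- The coefficient group `ℚ/ℤ`. -/
abbrev QZ : Type := ℚ ⧸ AddSubgroup.zmultiples (1 : ℚ)

/-- A (inhomogeneous) 2-cocycle on `G` with values in `ℚ/ℤ` (trivial action). -/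
def IsGrpCocycle {G : Type*} [Group G] (f : G → G → QZ) : Prop :=
  ∀ g h k : G, f g h + f (g * h) k = f h k + f g (h * k)

/-- A 2-coboundary on `G` with values in `ℚ/ℤ` (trivial action). -/
def IsGrpCoboundary {G : Type*} [Group G] (f : G → G → QZ) : Prop :=
  ∃ c : G → QZ, ∀ g h : G, f g h = c g + c h - c (g * h)

/-- The additive group of 2-cocycles. -/
def cocycles2 (G : Type*) [Group G] : AddSubgroup (G → G → QZ) where
  carrier := {f | IsGrpCocycle f}
  zero_mem' := by intro g h k; simp
  add_mem' := by
    intro a b ha hb g h k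
    simp only [Pi.add_apply]
    rw [add_add_add_comm, ha g h k, hb g h k, add_add_add_comm]
  neg_mem' := by
    intro a ha g h k
    simp only [Pi.neg_apply, ← neg_add]
    rw [ha g h k]

/-- The subgroup of 2-coboundaries inside the group of 2-cocycles. -/
def coboundaries2 (G : Type*) [Group G] : AddSubgroup (cocycles2 G) where
  carrier := {f | IsGrpCoboundary (f : G → G → QZ)}
  zero_mem' := ⟨0, by intro g h; simp⟩
  add_mem' := by
    rintro a b ⟨c, hc⟩ ⟨d, hd⟩
    refine ⟨c + d, fun g h => ?_⟩
    have : ((a + b : cocycles2 G) : G → G → QZ) g h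
        = (a : G → G → QZ) g h + (b : G → G → QZ) g h := rfl
    rw [this, hc g h, hd g h]
    simp only [Pi.add_apply]
    abel
  neg_mem' := by
    rintro a ⟨c, hc⟩
    refine ⟨-c, fun g h => ?_⟩
    have : ((-a : cocycles2 G) : G → G → QZ) g h = -((a : G → G → QZ) g h) := rfl
    rw [this, hc g h]
    simp only [Pi.neg_apply]
    abel

/-- The second cohomology group `H²(G, ℚ/ℤ)` (trivial action), as cocycles mod coboundaries. -/
abbrev H2 (G : Type*) [Group G] : Type _ := cocycles2 G ⧸ coboundaries2 G

/-- A group is bicyclic if it is cyclic or the direct product of two cyclic groups. -/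
def IsBicyclic (A : Type*) [Group A] : Prop :=
  IsCyclic A ∨ ∃ B C : Subgroup A, IsCyclic B ∧ IsCyclic C ∧ Nonempty (A ≃* B × C)

/-- The restriction of `f` to every bicyclic subgroup is a coboundary. -/
def RestrictsToCoboundaries {G : Type*} [Group G] (f : G → G → QZ) : Prop :=
  ∀ A : Subgroup G, IsBicyclic A → IsGrpCoboundary (fun a b : A => f a b)

/-- The Bogomolov multiplier `B₀(G)`: the subgroup of `H²(G, ℚ/ℤ)` consisting of the classes
whose restriction to every bicyclic subgroup of `G` vanishes. -/
def B0 (G : Type*) [Group G] : AddSubgroup (H2 G) where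
  carrier := {x | ∃ f : cocycles2 G,
    (QuotientAddGroup.mk f : H2 G) = x ∧ RestrictsToCoboundaries (f : G → G → QZ)}
  zero_mem' := by
    refine ⟨0, rfl, fun A _ => ⟨0, fun a b => ?_⟩⟩
    simp
  add_mem' := by
    rintro x y ⟨f, rfl, hf⟩ ⟨g, rfl, hg⟩
    refine ⟨f + g, rfl, fun A hA => ?_⟩
    obtain ⟨c, hc⟩ := hf A hA
    obtain ⟨d, hd⟩ := hg A hA
    refine ⟨c + d, fun a b => ?_⟩
    have hc' : (f : G → G → QZ) (a : G) (b : G) = c a + c b - c (a * b) := hc a b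
    have hd' : (g : G → G → QZ) (a : G) (b : G) = d a + d b - d (a * b) := hd a b
    show ((f + g : cocycles2 G) : G → G → QZ) (a : G) (b : G)
        = (c + d) a + (c + d) b - (c + d) (a * b)
    have : ((f + g : cocycles2 G) : G → G → QZ) (a : G) (b : G)
        = (f : G → G → QZ) (a : G) (b : G) + (g : G → G → QZ) (a : G) (b : G) := rfl
    rw [this, hc', hd']
    simp only [Pi.add_apply]
    abel
  neg_mem' := by
    rintro x ⟨f, rfl, hf⟩
    refine ⟨-f, rfl, fun A hA => ?_⟩
    obtain ⟨c, hc⟩ := hf A hA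
    refine ⟨-c, fun a b => ?_⟩
    have hc' : (f : G → G → QZ) (a : G) (b : G) = c a + c b - c (a * b) := hc a b
    show ((-f : cocycles2 G) : G → G → QZ) (a : G) (b : G)
        = (-c) a + (-c) b - (-c) (a * b)
    have : ((-f : cocycles2 G) : G → G → QZ) (a : G) (b : G)
        = -((f : G → G → QZ) (a : G) (b : G)) := rfl
    rw [this, hc']
    simp only [Pi.neg_apply]
    abel

/-- The commutator `[g,h] = g⁻¹h⁻¹gh`. -/
def cmt {G : Type*} [Group G] (g h : G) : G := g⁻¹ * h⁻¹ * g * h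

section Generic
variable {Γ : Type*} [Group Γ]

lemma cmt_def (x y : Γ) : cmt x y = x⁻¹ * y⁻¹ * x * y := rfl

lemma mul_eq_cmt (x y : Γ) : x * y = y * x * cmt x y := by
  unfold cmt; group

lemma cmt_central_left (z x : Γ) (hz : ∀ w, z * w = w * z) : cmt z x = 1 := by
  have h : z * x = x * z := hz x
  unfold cmt
  rw [mul_assoc, h]
  group

lemma cmt_central_right (z x : Γ) (hz : ∀ w, z * w = w * z) : cmt x z = 1 := by
  have h : z⁻¹ * x = x * z⁻¹ := (Commute.inv_left (show Commute z x from hz x)).eq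
  unfold cmt
  rw [mul_assoc x⁻¹, h]
  group

lemma cmt_mul_central_left (x y z : Γ) (hz : ∀ w, z * w = w * z) :
    cmt (x * z) y = cmt x y := by
  have h1 : z * y = y * z := hz y
  have h2 : z * (x⁻¹ * y⁻¹ * x * y) = x⁻¹ * y⁻¹ * x * y * z := hz _
  unfold cmt
  calc (x*z)⁻¹ * y⁻¹ * (x*z) * y
      = z⁻¹ * (x⁻¹ * y⁻¹ * x * (z * y)) := by group
    _ = z⁻¹ * (x⁻¹ * y⁻¹ * x * (y * z)) := by rw [h1]
    _ = z⁻¹ * (x⁻¹ * y⁻¹ * x * y * z) := by group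
    _ = z⁻¹ * (z * (x⁻¹ * y⁻¹ * x * y)) := by rw [← h2]
    _ = x⁻¹ * y⁻¹ * x * y := by group

lemma cmt_mul_central_right (x y z : Γ) (hz : ∀ w, z * w = w * z) :
    cmt x (y * z) = cmt x y := by
  unfold cmt
  calc x⁻¹ * (y*z)⁻¹ * x * (y*z)
      = x⁻¹ * (z⁻¹ * ((y⁻¹ * x * y) * z)) := by group
    _ = x⁻¹ * (z⁻¹ * (z * (y⁻¹ * x * y))) := by rw [← hz (y⁻¹ * x * y)]
    _ = x⁻¹ * y⁻¹ * x * y := by group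

lemma pow_mul_central (u v z : Γ) (hz : ∀ w, z * w = w * z) (h : u * v = v * u * z) :
    ∀ m : ℕ, u ^ m * v = v * u ^ m * z ^ m := by
  intro m
  induction m with
  | zero => simp
  | succ n ih =>
    have hcom : z * u ^ n = u ^ n * z := hz _
    calc u ^ (n+1) * v = u * (u ^ n * v) := by rw [pow_succ']; group
      _ = u * (v * u ^ n * z ^ n) := by rw [ih]
      _ = (u * v) * (u ^ n * z ^ n) := by group
      _ = (v * u * z) * (u ^ n * z ^ n) := by rw [h]
      _ = v * u * (z * u ^ n) * z ^ n := by group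
      _ = v * u * (u ^ n * z) * z ^ n := by rw [hcom]
      _ = v * u ^ (n+1) * z ^ (n+1) := by rw [pow_succ' u, pow_succ z]; group

lemma pow_pow_central (u v z : Γ) (hz : ∀ w, z * w = w * z) (h : u * v = v * u * z) :
    ∀ m k : ℕ, u ^ m * v ^ k = v ^ k * u ^ m * z ^ (m * k) := by
  intro m k
  induction k with
  | zero => simp
  | succ n ih =>
    have h1 : u ^ m * v = v * u ^ m * z ^ m := pow_mul_central u v z hz h m
    have hcom : z ^ (m*n) * v = v * z ^ (m*n) :=
      (Commute.pow_left (show Commute z v from hz v) (m*n)).eq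
    calc u ^ m * v ^ (n+1) = (u ^ m * v ^ n) * v := by rw [pow_succ]; group
      _ = v ^ n * u ^ m * z ^ (m*n) * v := by rw [ih]
      _ = v ^ n * (u ^ m * (z ^ (m*n) * v)) := by group
      _ = v ^ n * (u ^ m * (v * z ^ (m*n))) := by rw [hcom]
      _ = v ^ n * (u ^ m * v) * z ^ (m*n) := by group
      _ = v ^ n * (v * u ^ m * z ^ m) * z ^ (m*n) := by rw [h1]
      _ = v ^ (n+1) * u ^ m * (z ^ m * z ^ (m*n)) := by rw [pow_succ' v]; group
      _ = v ^ (n+1) * u ^ m * z ^ (m * (n+1)) := by rw [← pow_add]; ring_nf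

lemma cmt_pow_left (x y : Γ) (h : ∀ w, cmt x y * w = w * cmt x y) :
    ∀ n : ℕ, cmt (x ^ n) y = (cmt x y) ^ n := by
  have hconj : y⁻¹ * x * y = x * cmt x y := by unfold cmt; group
  have key : ∀ n : ℕ, y⁻¹ * x ^ n * y = x ^ n * (cmt x y) ^ n := by
    intro n
    induction n with
    | zero => simp
    | succ n ih =>
      have hc : cmt x y ^ n * x = x * cmt x y ^ n :=
        (Commute.pow_left (show Commute (cmt x y) x from h x) n).eq
      calc y⁻¹ * x ^ (n+1) * y = (y⁻¹ * x ^ n * y) * (y⁻¹ * x * y) := by rw [pow_succ]; group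
        _ = x ^ n * cmt x y ^ n * (x * cmt x y) := by rw [ih, hconj]
        _ = x ^ n * (cmt x y ^ n * x) * cmt x y := by group
        _ = x ^ n * (x * cmt x y ^ n) * cmt x y := by rw [hc]
        _ = x ^ (n+1) * cmt x y ^ (n+1) := by rw [pow_succ' x, pow_succ]; group
  intro n
  have h2 : cmt (x ^ n) y = (x ^ n)⁻¹ * (y⁻¹ * x ^ n * y) := by unfold cmt; group
  rw [h2, key]; group

lemma conj_pow' (y b : Γ) (i : ℕ) : y⁻¹ * b ^ i * y = (y⁻¹ * b * y) ^ i := by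
  have := conj_pow (i := i) (a := y⁻¹) (b := b)
  simpa [inv_inv] using this.symm

lemma cmt_pow_right (x y : Γ) (hd : ∀ w, cmt (cmt x y) y * w = w * cmt (cmt x y) y) :
    ∀ n : ℕ, cmt x (y ^ n) = (cmt x y) ^ n * (cmt (cmt x y) y) ^ (n * (n-1) / 2) := by
  set c := cmt x y with hc
  set d := cmt c y with hdd
  have hconj : y⁻¹ * x * y = x * c := by rw [hc]; unfold cmt; group
  have hconjc : y⁻¹ * c * y = c * d := by rw [hdd]; unfold cmt; group
  have hdc : Commute c d := (Commute.symm (show Commute d c from hd c))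
  have key : ∀ n : ℕ, (y ^ n)⁻¹ * x * (y ^ n) = x * c ^ n * d ^ (n * (n-1) / 2) := by
    intro n
    induction n with
    | zero => simp
    | succ n ih =>
      have hmove : d ^ (n * (n-1)/2) * y = y * d ^ (n * (n-1)/2) :=
        (Commute.pow_left (show Commute d y from hd y) _).eq
      have hdn : d ^ n * c = c * d ^ n := (Commute.pow_left hdc.symm n).eq
      calc (y ^ (n+1))⁻¹ * x * (y ^ (n+1))
          = y⁻¹ * ((y ^ n)⁻¹ * x * y ^ n) * y := by rw [pow_succ]; group
        _ = y⁻¹ * (x * c ^ n * d ^ (n * (n-1)/2)) * y := by rw [ih]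
        _ = (y⁻¹ * x * y) * (y⁻¹ * c ^ n * y) * (y⁻¹ * (d ^ (n * (n-1)/2) * y)) := by group
        _ = (y⁻¹ * x * y) * (y⁻¹ * c ^ n * y) * (y⁻¹ * (y * d ^ (n * (n-1)/2))) := by rw [hmove]
        _ = (x * c) * (y⁻¹ * c * y) ^ n * d ^ (n * (n-1)/2) := by rw [hconj, conj_pow']; group
        _ = (x * c) * (c ^ n * d ^ n) * d ^ (n * (n-1)/2) := by rw [hconjc, hdc.mul_pow]
        _ = x * (c * c ^ n) * (d ^ n * d ^ (n * (n-1)/2)) := by group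
        _ = x * c ^ (n+1) * d ^ (n + n * (n-1)/2) := by rw [← pow_succ' c, ← pow_add]
        _ = x * c ^ (n+1) * d ^ ((n+1) * ((n+1)-1) / 2) := by
              have he : n + n * (n-1)/2 = (n+1) * ((n+1)-1) / 2 := by
                rw [Nat.triangle_succ]; omega
              rw [he]
  intro n
  have h2 : cmt x (y ^ n) = x⁻¹ * ((y ^ n)⁻¹ * x * (y ^ n)) := by unfold cmt; group
  rw [h2, key]; group

lemma pow_int_reduce {p : ℕ} (x : Γ) (hp : 0 < p) (hx : x ^ p = 1) (m : ℤ) :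
    ∃ n : ℕ, x ^ m = x ^ n := by
  refine ⟨(m % (p:ℤ)).toNat, ?_⟩
  have hp' : (0:ℤ) < (p:ℤ) := by exact_mod_cast hp
  have h0 : (0:ℤ) ≤ m % (p:ℤ) := Int.emod_nonneg m hp'.ne'
  have hsplit : (p:ℤ) * (m / (p:ℤ)) + m % (p:ℤ) = m := Int.mul_ediv_add_emod m p
  calc x ^ m = x ^ ((p:ℤ) * (m / (p:ℤ)) + m % (p:ℤ)) := by rw [hsplit]
    _ = (x ^ ((p:ℤ) * (m / (p:ℤ)))) * x ^ (m % (p:ℤ)) := zpow_add x _ _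
    _ = ((x ^ (p:ℤ)) ^ (m / (p:ℤ))) * x ^ (m % (p:ℤ)) := by rw [zpow_mul]
    _ = x ^ (m % (p:ℤ)) := by
        rw [show x ^ (p:ℤ) = 1 by rw [zpow_natCast, hx]]
        simp
    _ = x ^ (m % (p:ℤ)).toNat := by
        rw [← zpow_natCast, Int.toNat_of_nonneg h0]

lemma qz_divisible (n : ℕ) (hn : n ≠ 0) (v : ℚ ⧸ AddSubgroup.zmultiples (1 : ℚ)) :
    ∃ t, n • t = v := by
  obtain ⟨q, rfl⟩ := QuotientAddGroup.mk_surjective v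
  refine ⟨QuotientAddGroup.mk' _ (q / n), ?_⟩
  rw [← map_nsmul]
  have : (n • (q / n) : ℚ) = q := by
    rw [nsmul_eq_mul]
    field_simp
  rw [this]
  rfl

lemma mv_comm {a b : Γ} (h : Commute a b) (x : Γ) : a * (b * x) = b * (a * x) := by
  rw [← mul_assoc, h.eq, mul_assoc]

lemma mvt {a b z : Γ} (h : a * b = b * a * z) (x : Γ) : a * (b * x) = b * (a * (z * x)) := by
  rw [← mul_assoc, h]
  simp only [mul_assoc]

lemma pj (a : Γ) (m k : ℕ) (x : Γ) : a ^ m * (a ^ k * x) = a ^ (m + k) * x := by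
  rw [← mul_assoc, ← pow_add]

end Generic


section Bic
variable {Γ : Type*} [Group Γ]

lemma isCyclic_zpowers (g : Γ) : IsCyclic ↥(Subgroup.zpowers g) := by
  refine ⟨⟨⟨g, Subgroup.mem_zpowers g⟩, fun x => ?_⟩⟩
  obtain ⟨k, hk⟩ := Subgroup.mem_zpowers_iff.mp x.2
  exact Subgroup.mem_zpowers_iff.mpr ⟨k, Subtype.ext (by rw [← hk]; exact SubgroupClass.coe_zpow _ k)⟩

lemma mem_closure_pair_comm {a b : Γ} (h : a * b = b * a) {x : Γ}
    (hx : x ∈ Subgroup.closure {a, b}) : ∃ m n : ℤ, x = a ^ m * b ^ n := by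
  have hc : Commute a b := h
  induction hx using Subgroup.closure_induction with
  | mem x hxx =>
    rcases hxx with h1 | h2
    · exact ⟨1, 0, by simp [h1]⟩
    · exact ⟨0, 1, by simp at h2; simp [h2]⟩
  | one => exact ⟨0, 0, by simp⟩
  | mul x y hx hy ihx ihy =>
    obtain ⟨m, n, rfl⟩ := ihx
    obtain ⟨m', n', rfl⟩ := ihy
    refine ⟨m + m', n + n', ?_⟩
    have hcomm : b ^ n * a ^ m' = a ^ m' * b ^ n := ((hc.symm).zpow_zpow n m').eq
    calc a ^ m * b ^ n * (a ^ m' * b ^ n')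
        = a ^ m * (b ^ n * a ^ m') * b ^ n' := by group
      _ = a ^ m * (a ^ m' * b ^ n) * b ^ n' := by rw [hcomm]
      _ = (a ^ m * a ^ m') * (b ^ n * b ^ n') := by group
      _ = a ^ (m + m') * b ^ (n + n') := by rw [← zpow_add, ← zpow_add]
  | inv x hx ihx =>
    obtain ⟨m, n, rfl⟩ := ihx
    refine ⟨-m, -n, ?_⟩
    have hcomm : b ^ (-n) * a ^ (-m) = a ^ (-m) * b ^ (-n) := ((hc.symm).zpow_zpow _ _).eq
    rw [mul_inv_rev, ← zpow_neg, ← zpow_neg, hcomm]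

lemma bicyclic_aux {p : ℕ} (hp : p.Prime) (z g : Γ) (hzg : z * g = g * z)
    (hz : z ^ p = 1) : IsBicyclic ↥(Subgroup.closure {z, g}) := by
  by_cases hmem : z ∈ Subgroup.zpowers g
  · left
    have heq : Subgroup.closure {z, g} = Subgroup.zpowers g := by
      apply le_antisymm
      · rw [Subgroup.closure_le]
        intro x hx
        rcases hx with h1 | h2
        · simpa [h1] using hmem
        · simp at h2; simpa [h2] using Subgroup.mem_zpowers g
      · rw [Subgroup.zpowers_eq_closure]
        exact Subgroup.closure_mono (by intro x hx; simp at hx; simp [hx])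
    rw [heq]
    exact isCyclic_zpowers g
  · right
    set A := Subgroup.closure ({z, g} : Set Γ) with hA
    have hzA : z ∈ A := Subgroup.subset_closure (Set.mem_insert _ _)
    have hgA : g ∈ A := Subgroup.subset_closure (Set.mem_insert_of_mem _ rfl)
    set za : ↥A := ⟨z, hzA⟩
    set ga : ↥A := ⟨g, hgA⟩
    have hcom : za * ga = ga * za := Subtype.ext hzg
    refine ⟨Subgroup.zpowers za, Subgroup.zpowers ga, isCyclic_zpowers za, isCyclic_zpowers ga, ?_⟩
    -- build MonoidHom from product
    let φ : ↥(Subgroup.zpowers za) × ↥(Subgroup.zpowers ga) →* ↥A :=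
      { toFun := fun bc => bc.1.1 * bc.2.1
        map_one' := by simp
        map_mul' := by
          rintro ⟨⟨b, hb⟩, ⟨c, hc⟩⟩ ⟨⟨b', hb'⟩, ⟨c', hc'⟩⟩
          obtain ⟨m, hm⟩ := Subgroup.mem_zpowers_iff.mp hb'
          obtain ⟨n, hn⟩ := Subgroup.mem_zpowers_iff.mp hc
          have hcc : c * b' = b' * c := by
            rw [← hm, ← hn]
            exact (((show Commute za ga from hcom).symm).zpow_zpow n m).eq
          simp only [Submonoid.coe_mul]
          calc b * b' * (c * c') = b * (b' * c) * c' := by group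
            _ = b * (c * b') * c' := by rw [hcc]
            _ = b * c * (b' * c') := by group }
    have hinj : Function.Injective φ := by
      rw [injective_iff_map_eq_one]
      rintro ⟨⟨b, hb⟩, ⟨c, hc⟩⟩ hbc
      obtain ⟨m, hm⟩ := Subgroup.mem_zpowers_iff.mp hb
      obtain ⟨n, hn⟩ := Subgroup.mem_zpowers_iff.mp hc
      have hval : (b : ↥A) * c = 1 := hbc
      have hvalG : (b : ↥A).1 * (c : ↥A).1 = 1 := by
        rw [← Submonoid.coe_mul, hval]; rfl
      have hbz : (b : ↥A).1 = z ^ m := by rw [← hm]; exact (SubgroupClass.coe_zpow za m)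
      have hcg : (c : ↥A).1 = g ^ n := by rw [← hn]; exact (SubgroupClass.coe_zpow ga n)
      have hzm : z ^ m * g ^ n = 1 := by rw [← hbz, ← hcg]; exact hvalG
      have hzmem : z ^ m ∈ Subgroup.zpowers g := by
        have : z ^ m = (g ^ n)⁻¹ := by
          rw [eq_inv_iff_mul_eq_one]; exact hzm
        rw [this]
        exact Subgroup.inv_mem _ (Subgroup.zpow_mem _ (Subgroup.mem_zpowers g) n)
      have hzm1 : z ^ m = 1 := by
        by_contra hne
        -- p prime, z^p=1, z^m ≠ 1 ⇒ gcd stuff ⇒ z ∈ zpowers g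
        have hpd : ¬ ((p:ℤ) ∣ m) := by
          intro ⟨k, hk⟩
          apply hne
          rw [hk, zpow_mul, show (z : Γ) ^ (p:ℤ) = 1 by rw [zpow_natCast, hz], one_zpow]
        have hgcd : Int.gcd m (p:ℤ) = 1 := by
          have hd : (Int.gcd m (p:ℤ)) ∣ p := by
            have h := Int.gcd_dvd_right (a := m) (b := (p:ℤ))
            exact_mod_cast h
          rcases (Nat.Prime.eq_one_or_self_of_dvd hp _ hd) with h1 | h1
          · exact h1
          · exfalso
            apply hpd
            have := Int.gcd_dvd_left (a := m) (b := (p:ℤ))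
            rw [h1] at this
            exact this
        obtain ⟨u, v, huv⟩ := Int.isCoprime_iff_gcd_eq_one.mpr hgcd
        apply hmem
        have : z = (z ^ m) ^ u * (z ^ (p:ℤ)) ^ v := by
          rw [← zpow_mul, ← zpow_mul, ← zpow_add]
          rw [show m * u + (p:ℤ) * v = 1 from by linarith [huv]]
          simp
        rw [this, show (z:Γ) ^ (p:ℤ) = 1 by rw [zpow_natCast, hz], one_zpow, mul_one]
        exact Subgroup.zpow_mem _ hzmem u
      have hgn : g ^ n = 1 := by
        rw [hzm1, one_mul] at hzm; exact hzm
      have hb1 : b = (1 : ↥A) := Subtype.ext (by rw [hbz, hzm1]; rfl)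
      have hc1 : c = (1 : ↥A) := Subtype.ext (by rw [hcg, hgn]; rfl)
      refine Prod.ext ?_ ?_
      · exact Subtype.ext hb1
      · exact Subtype.ext hc1
    have hsurj : Function.Surjective φ := by
      intro x
      have hxA : (x : Γ) ∈ Subgroup.closure ({z, g} : Set Γ) := x.2
      obtain ⟨m, n, hmn⟩ := mem_closure_pair_comm hzg hxA
      refine ⟨(⟨za ^ m, Subgroup.zpow_mem _ (Subgroup.mem_zpowers za) m⟩,
               ⟨ga ^ n, Subgroup.zpow_mem _ (Subgroup.mem_zpowers ga) n⟩), ?_⟩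
      apply Subtype.ext
      show ((za ^ m : ↥A) : Γ) * ((ga ^ n : ↥A) : Γ) = (x : Γ)
      rw [SubgroupClass.coe_zpow za m, SubgroupClass.coe_zpow ga n]
      exact hmn.symm
    exact ⟨(MulEquiv.ofBijective φ ⟨hinj, hsurj⟩).symm⟩

end Bic

@[ext]
structure ExtC (G : Type) where
  a : QZ
  g : G

section Key

set_option maxHeartbeats 1000000 in
theorem key {G : Type} [Group G] [Finite G] {p : ℕ} (hp : p.Prime) (hodd : Odd p)
    (hcard : Nat.card G = p ^ 5) (f1 f2 f0 h1 h2 : G)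
    (hgen : Subgroup.closure {f1, f2, f0, h1, h2} = ⊤)
    (hcen : Subgroup.closure {h1, h2} = Subgroup.center G)
    (r1 : cmt f1 f2 = f0) (r2 : cmt f0 f1 = h1) (r3 : cmt f0 f2 = h2)
    (r4 : f0 ^ p = 1) (r5 : h1 ^ p = 1) (r6 : h2 ^ p = 1)
    (r7 : f1 ^ p ∈ Subgroup.closure ({h1, h2} : Set G))
    (r8 : f2 ^ p ∈ Subgroup.closure ({h1, h2} : Set G))
    (f : G → G → QZ) (hf : IsGrpCocycle f) (hn1 : ∀ x, f 1 x = 0) (hn2 : ∀ x, f x 1 = 0)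
    (hsym : ∀ z x : G, (∀ w, z * w = w * z) → z ^ p = 1 → f z x = f x z) :
    IsGrpCoboundary f := by
  classical
  have hppos : 0 < p := hp.pos
  have hp1 : p - 1 + 1 = p := Nat.succ_pred_eq_of_pos hppos
  -- central p-torsion predicate
  have hcent : ∀ z ∈ Subgroup.closure ({h1, h2} : Set G), (∀ w, z * w = w * z) ∧ z ^ p = 1 := by
    intro z hz
    have hh1c : ∀ w, h1 * w = w * h1 := by
      intro w
      have hm : h1 ∈ Subgroup.center G := by
        rw [← hcen]; exact Subgroup.subset_closure (Set.mem_insert _ _)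
      exact (Subgroup.mem_center_iff.mp hm w).symm
    have hh2c : ∀ w, h2 * w = w * h2 := by
      intro w
      have hm : h2 ∈ Subgroup.center G := by
        rw [← hcen]; exact Subgroup.subset_closure (Set.mem_insert_of_mem _ rfl)
      exact (Subgroup.mem_center_iff.mp hm w).symm
    induction hz using Subgroup.closure_induction with
    | mem x hx =>
      rcases hx with hx | hx
      · exact hx ▸ ⟨hh1c, r5⟩
      · simp only [Set.mem_singleton_iff] at hx
        exact hx ▸ ⟨hh2c, r6⟩
    | one => exact ⟨fun w => by rw [one_mul, mul_one], one_pow p⟩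
    | mul x y hx hy ihx ihy =>
      refine ⟨fun w => ?_, ?_⟩
      · rw [mul_assoc, ihy.1 w, ← mul_assoc, ihx.1 w, mul_assoc]
      · rw [(show Commute x y from ihx.1 y).mul_pow, ihx.2, ihy.2, one_mul]
    | inv x hx ihx =>
      refine ⟨fun w => ?_, ?_⟩
      · exact (Commute.inv_left (show Commute x w from ihx.1 w)).eq
      · rw [inv_pow, ihx.2, inv_one]
  -- the extension group E on ExtC G
  letI : Mul (ExtC G) := ⟨fun x y => ⟨x.a + y.a + f x.g y.g, x.g * y.g⟩⟩
  letI : One (ExtC G) := ⟨⟨0, 1⟩⟩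
  letI : Inv (ExtC G) := ⟨fun x => ⟨-x.a - f x.g x.g⁻¹, x.g⁻¹⟩⟩
  have hmul : ∀ x y : ExtC G, x * y = ⟨x.a + y.a + f x.g y.g, x.g * y.g⟩ := fun _ _ => rfl
  have hone : (1 : ExtC G) = ⟨0, 1⟩ := rfl
  have hinv : ∀ x : ExtC G, x⁻¹ = ⟨-x.a - f x.g x.g⁻¹, x.g⁻¹⟩ := fun _ => rfl
  have hfinv : ∀ x : G, f x⁻¹ x = f x x⁻¹ := by
    intro x
    have h := hf x x⁻¹ x
    rw [mul_inv_cancel, inv_mul_cancel, hn1, hn2, add_zero, add_zero] at h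
    exact h.symm
  letI : Group (ExtC G) := Group.ofLeftAxioms
    (fun x y z => by
      rw [hmul, hmul, hmul, hmul]
      have hc := hf x.g y.g z.g
      apply ExtC.ext
      · show x.a + y.a + f x.g y.g + z.a + f (x.g * y.g) z.g
            = x.a + (y.a + z.a + f y.g z.g) + f x.g (y.g * z.g)
        calc x.a + y.a + f x.g y.g + z.a + f (x.g * y.g) z.g
            = x.a + y.a + z.a + (f x.g y.g + f (x.g * y.g) z.g) := by abel
          _ = x.a + y.a + z.a + (f y.g z.g + f x.g (y.g * z.g)) := by rw [hc]
          _ = x.a + (y.a + z.a + f y.g z.g) + f x.g (y.g * z.g) := by abel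
      · exact mul_assoc x.g y.g z.g)
    (fun x => by
      rw [hone, hmul]
      apply ExtC.ext
      · show 0 + x.a + f 1 x.g = x.a
        rw [hn1]; abel
      · exact one_mul x.g)
    (fun x => by
      rw [hinv, hmul, hone]
      apply ExtC.ext
      · show -x.a - f x.g x.g⁻¹ + x.a + f x.g⁻¹ x.g = 0
        rw [hfinv]; abel
      · exact inv_mul_cancel x.g)
  -- projection hom
  let πE : ExtC G →* G := { toFun := ExtC.g, map_one' := rfl, map_mul' := fun _ _ => rfl }
  have hπ : ∀ x : ExtC G, πE x = x.g := fun _ => rfl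
  have hgcmt : ∀ x y : ExtC G, (cmt x y).g = cmt x.g y.g := by
    intro x y
    show πE (cmt x y) = cmt (πE x) (πE y)
    simp [cmt]
  have hgpow : ∀ (x : ExtC G) (n : ℕ), (x ^ n).g = x.g ^ n := by
    intro x n
    show πE (x ^ n) = (πE x) ^ n
    rw [map_pow]
  have hgzpow : ∀ (x : ExtC G) (n : ℤ), (x ^ n).g = x.g ^ n := by
    intro x n
    show πE (x ^ n) = (πE x) ^ n
    rw [map_zpow]
  -- central elements of E
  have hcommE : ∀ x : ExtC G, ((∀ w : G, x.g * w = w * x.g) ∧ x.g ^ p = 1) →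
      ∀ w : ExtC G, x * w = w * x := by
    rintro x ⟨hxc, hxp⟩ w
    rw [hmul, hmul]
    apply ExtC.ext
    · show x.a + w.a + f x.g w.g = w.a + x.a + f w.g x.g
      rw [hsym x.g w.g hxc hxp]; abel
    · exact hxc w.g
  -- generators in E
  set S1O : ExtC G := ⟨0, f1⟩ with hS1Odef
  set S2O : ExtC G := ⟨0, f2⟩ with hS2Odef
  set S0 : ExtC G := cmt S1O S2O with hS0def
  set Hh1 : ExtC G := cmt S0 S1O with hH1def
  set Hh2 : ExtC G := cmt S0 S2O with hH2def
  have hS0g : S0.g = f0 := by rw [hS0def, hgcmt]; show cmt f1 f2 = f0; exact r1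
  have hH1g : Hh1.g = h1 := by rw [hH1def, hgcmt, hS0g]; exact r2
  have hH2g : Hh2.g = h2 := by rw [hH2def, hgcmt, hS0g]; exact r3
  have hch1 := hcent h1 (Subgroup.subset_closure (Set.mem_insert _ _))
  have hch2 := hcent h2 (Subgroup.subset_closure (Set.mem_insert_of_mem _ rfl))
  have hH1c : ∀ w, Hh1 * w = w * Hh1 := hcommE Hh1 (by rw [hH1g]; exact hch1)
  have hH2c : ∀ w, Hh2 * w = w * Hh2 := hcommE Hh2 (by rw [hH2g]; exact hch2)
  -- H1^p = 1, H2^p = 1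
  have hS0pc : ∀ w, (S0 ^ p) * w = w * (S0 ^ p) :=
    hcommE _ (by rw [hgpow, hS0g, r4]; exact ⟨fun w => by rw [one_mul, mul_one], one_pow p⟩)
  have hH1p : Hh1 ^ p = 1 := by
    have h := cmt_pow_left S0 S1O (fun w => by rw [← hH1def]; exact hH1c w) p
    rw [cmt_central_left _ _ hS0pc, ← hH1def] at h
    exact h.symm
  have hH2p : Hh2 ^ p = 1 := by
    have h := cmt_pow_left S0 S2O (fun w => by rw [← hH2def]; exact hH2c w) p
    rw [cmt_central_left _ _ hS0pc, ← hH2def] at h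
    exact h.symm
  -- S0^p = 1
  have hS2Opc : ∀ w, (S2O ^ p) * w = w * (S2O ^ p) :=
    hcommE _ (by
      have h := hcent _ r8
      rw [hgpow]
      have hg2 : S2O.g = f2 := by rw [hS2Odef]
      rw [hg2]
      exact h)
  obtain ⟨k, hk⟩ := hodd
  have hpk : p - 1 = 2 * k := by omega
  have hexp : p * (p - 1) / 2 = p * k := by
    rw [hpk, show p * (2 * k) = 2 * (p * k) from by ring]
    exact Nat.mul_div_cancel_left _ (by norm_num)
  have hS0p : S0 ^ p = 1 := by
    have hd := cmt_pow_right S1O S2O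
      (fun w => by rw [← hS0def, ← hH2def]; exact hH2c w) p
    rw [cmt_central_right _ _ hS2Opc, ← hS0def, ← hH2def] at hd
    rw [hexp, pow_mul, hH2p, one_pow, mul_one] at hd
    exact hd.symm
  -- decompose f1^p and f2^p
  have hcomh : h1 * h2 = h2 * h1 := hch1.1 h2
  obtain ⟨α, β, hαβ⟩ := mem_closure_pair_comm hcomh r7
  obtain ⟨γ, δ, hγδ⟩ := mem_closure_pair_comm hcomh r8
  obtain ⟨a1, ha1⟩ := pow_int_reduce Hh1 hppos hH1p α
  obtain ⟨b1, hb1⟩ := pow_int_reduce Hh2 hppos hH2p β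
  obtain ⟨c1, hc1⟩ := pow_int_reduce Hh1 hppos hH1p γ
  obtain ⟨d1, hd1⟩ := pow_int_reduce Hh2 hppos hH2p δ
  set TP1 : ExtC G := Hh1 ^ a1 * Hh2 ^ b1 with hTP1def
  set TP2 : ExtC G := Hh1 ^ c1 * Hh2 ^ d1 with hTP2def
  have hTP1g : TP1.g = f1 ^ p := by
    have e1 : (h1 : G) ^ (α : ℤ) = h1 ^ a1 := by
      have := congrArg πE ha1
      rwa [map_zpow, map_pow, hπ, hH1g] at this
    have e2 : (h2 : G) ^ (β : ℤ) = h2 ^ b1 := by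
      have := congrArg πE hb1
      rwa [map_zpow, map_pow, hπ, hH2g] at this
    show πE TP1 = f1 ^ p
    rw [hTP1def, map_mul, map_pow, map_pow, hπ, hπ, hH1g, hH2g, ← e1, ← e2]
    exact hαβ.symm
  have hTP2g : TP2.g = f2 ^ p := by
    have e1 : (h1 : G) ^ (γ : ℤ) = h1 ^ c1 := by
      have := congrArg πE hc1
      rwa [map_zpow, map_pow, hπ, hH1g] at this
    have e2 : (h2 : G) ^ (δ : ℤ) = h2 ^ d1 := by
      have := congrArg πE hd1
      rwa [map_zpow, map_pow, hπ, hH2g] at this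
    show πE TP2 = f2 ^ p
    rw [hTP2def, map_mul, map_pow, map_pow, hπ, hπ, hH1g, hH2g, ← e1, ← e2]
    exact hγδ.symm
  -- adjusted lifts
  obtain ⟨t1, ht1⟩ := qz_divisible p hppos.ne' (TP1.a - (S1O ^ p).a)
  obtain ⟨t2, ht2⟩ := qz_divisible p hppos.ne' (TP2.a - (S2O ^ p).a)
  have hA1c : ∀ w, (⟨t1, 1⟩ : ExtC G) * w = w * ⟨t1, 1⟩ :=
    hcommE _ ⟨fun w => by rw [one_mul, mul_one], one_pow p⟩
  have hA2c : ∀ w, (⟨t2, 1⟩ : ExtC G) * w = w * ⟨t2, 1⟩ :=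
    hcommE _ ⟨fun w => by rw [one_mul, mul_one], one_pow p⟩
  set S1 : ExtC G := S1O * ⟨t1, 1⟩ with hS1def
  set S2 : ExtC G := S2O * ⟨t2, 1⟩ with hS2def
  have hS1g : S1.g = f1 := by rw [hS1def, hmul]; exact mul_one f1
  have hS2g : S2.g = f2 := by rw [hS2def, hmul]; exact mul_one f2
  have hcmt12 : cmt S1 S2 = S0 := by
    rw [hS1def, hS2def, cmt_mul_central_left _ _ _ hA1c, cmt_mul_central_right _ _ _ hA2c,
      ← hS0def]
  have hcmt01 : cmt S0 S1 = Hh1 := by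
    rw [hS1def, cmt_mul_central_right _ _ _ hA1c, ← hH1def]
  have hcmt02 : cmt S0 S2 = Hh2 := by
    rw [hS2def, cmt_mul_central_right _ _ _ hA2c, ← hH2def]
  -- power normalization
  have hApow : ∀ (t : QZ) (n : ℕ), (⟨t, 1⟩ : ExtC G) ^ n = ⟨n • t, 1⟩ := by
    intro t n
    induction n with
    | zero => rw [pow_zero, hone]; exact ExtC.ext (zero_smul ℕ t).symm rfl
    | succ n ih =>
      rw [pow_succ, ih, hmul]
      apply ExtC.ext
      · show n • t + t + f 1 1 = (n + 1) • t
        rw [hn1, succ_nsmul]; abel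
      · exact one_mul 1
  have hS1p : S1 ^ p = TP1 := by
    have hcm : Commute S1O (⟨t1, 1⟩ : ExtC G) := (hA1c S1O).symm
    rw [hS1def, hcm.mul_pow, hApow, hmul]
    apply ExtC.ext
    · show (S1O ^ p).a + p • t1 + f (S1O ^ p).g 1 = TP1.a
      rw [hn2, ht1]; abel
    · show (S1O ^ p).g * 1 = TP1.g
      rw [mul_one, hgpow, hTP1g]
  have hS2p : S2 ^ p = TP2 := by
    have hcm : Commute S2O (⟨t2, 1⟩ : ExtC G) := (hA2c S2O).symm
    rw [hS2def, hcm.mul_pow, hApow, hmul]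
    apply ExtC.ext
    · show (S2O ^ p).a + p • t2 + f (S2O ^ p).g 1 = TP2.a
      rw [hn2, ht2]; abel
    · show (S2O ^ p).g * 1 = TP2.g
      rw [mul_one, hgpow, hTP2g]
  have hS1pc : ∀ w, (S1 ^ p) * w = w * (S1 ^ p) :=
    hcommE _ (by rw [hgpow, hS1g]; exact hcent _ r7)
  have hS2pc : ∀ w, (S2 ^ p) * w = w * (S2 ^ p) :=
    hcommE _ (by rw [hgpow, hS2g]; exact hcent _ r8)
  -- collection relations
  have e1 : S1 * S2 = S2 * S1 * S0 := by rw [← hcmt12]; exact mul_eq_cmt S1 S2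
  have e2 : S0 * S1 = S1 * S0 * Hh1 := by rw [← hcmt01]; exact mul_eq_cmt S0 S1
  have e3 : S0 * S2 = S2 * S0 * Hh2 := by rw [← hcmt02]; exact mul_eq_cmt S0 S2
  have e4 : S2 * S1 = S1 * S2 * S0⁻¹ := by rw [e1]; group
  have hS0inv : S0⁻¹ = S0 ^ (p - 1) := by
    have hm : S0 * S0 ^ (p - 1) = 1 := by rw [← pow_succ', hp1, hS0p]
    exact inv_eq_of_mul_eq_one_right hm
  -- commuting facts, powered
  have hcm20 : Commute Hh2 S0 := hH2c S0
  have hcm21 : Commute Hh2 S1 := hH2c S1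
  have hcm22 : Commute Hh2 S2 := hH2c S2
  have hcm2H : Commute Hh2 Hh1 := hH2c Hh1
  have hcm10 : Commute Hh1 S0 := hH1c S0
  have hcm11 : Commute Hh1 S1 := hH1c S1
  have hcm12 : Commute Hh1 S2 := hH1c S2
  -- NF set
  set NF : Set (ExtC G) := {x | ∃ c d e : ℕ, x = S0 ^ c * (Hh1 ^ d * Hh2 ^ e)} with hNFdef
  have hNF1 : (1 : ExtC G) ∈ NF := ⟨0, 0, 0, by simp⟩
  have hNFprod : ∀ c d e c' d' e' : ℕ,
      (S0 ^ c * (Hh1 ^ d * Hh2 ^ e)) * (S0 ^ c' * (Hh1 ^ d' * Hh2 ^ e'))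
      = S0 ^ (c + c') * (Hh1 ^ (d + d') * Hh2 ^ (e + e')) := by
    intro c d e c' d' e'
    calc (S0 ^ c * (Hh1 ^ d * Hh2 ^ e)) * (S0 ^ c' * (Hh1 ^ d' * Hh2 ^ e'))
        = S0 ^ c * (Hh1 ^ d * (Hh2 ^ e * (S0 ^ c' * (Hh1 ^ d' * Hh2 ^ e')))) := by
          simp only [mul_assoc]
      _ = S0 ^ c * (Hh1 ^ d * (S0 ^ c' * (Hh2 ^ e * (Hh1 ^ d' * Hh2 ^ e')))) := by
          rw [mv_comm (hcm20.pow_pow e c')]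
      _ = S0 ^ c * (Hh1 ^ d * (S0 ^ c' * (Hh1 ^ d' * (Hh2 ^ e * Hh2 ^ e')))) := by
          rw [mv_comm (hcm2H.pow_pow e d')]
      _ = S0 ^ c * (S0 ^ c' * (Hh1 ^ d * (Hh1 ^ d' * (Hh2 ^ e * Hh2 ^ e')))) := by
          rw [mv_comm (hcm10.pow_pow d c')]
      _ = S0 ^ (c + c') * (Hh1 ^ (d + d') * Hh2 ^ (e + e')) := by
          rw [pj, pj, ← pow_add]
  have hNFmul : ∀ x ∈ NF, ∀ y ∈ NF, x * y ∈ NF := by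
    rintro x ⟨c, d, e, rfl⟩ y ⟨c', d', e', rfl⟩
    exact ⟨c + c', d + d', e + e', hNFprod c d e c' d' e'⟩
  have hNFpow : ∀ x ∈ NF, ∀ q : ℕ, x ^ q ∈ NF := by
    intro x hx q
    induction q with
    | zero => rw [pow_zero]; exact hNF1
    | succ n ih => rw [pow_succ]; exact hNFmul _ ih _ hx
  have hexp2 : ∀ c : ℕ, c + c * (p - 1) = p * c := by
    intro c
    rw [show c + c * (p - 1) = c * (p - 1 + 1) from by ring, hp1, Nat.mul_comm]
  have hpowp_one : ∀ (y : ExtC G), y ^ p = 1 → ∀ c : ℕ, y ^ c * y ^ (c * (p - 1)) = 1 := by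
    intro y hy c
    rw [← pow_add, hexp2 c, pow_mul, hy, one_pow]
  have hNFinv : ∀ x ∈ NF, x⁻¹ ∈ NF := by
    rintro x ⟨c, d, e, rfl⟩
    refine ⟨c * (p - 1), d * (p - 1), e * (p - 1), ?_⟩
    have h := hNFprod c d e (c * (p - 1)) (d * (p - 1)) (e * (p - 1))
    have hone' : S0 ^ (c + c * (p-1)) * (Hh1 ^ (d + d * (p-1)) * Hh2 ^ (e + e * (p-1))) = 1 := by
      have h0 := hpowp_one S0 hS0p c
      have h1' := hpowp_one Hh1 hH1p d
      have h2' := hpowp_one Hh2 hH2p e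
      rw [pow_add S0, pow_add Hh1, pow_add Hh2, h0, h1', h2']
      simp
    rw [hone'] at h
    exact inv_eq_of_mul_eq_one_right h
  -- exact move formulas
  have hm1 : ∀ c a : ℕ, S0 ^ c * S1 ^ a = S1 ^ a * S0 ^ c * Hh1 ^ (c * a) :=
    pow_pow_central S0 S1 Hh1 hH1c e2
  have hm2 : ∀ c b : ℕ, S0 ^ c * S2 ^ b = S2 ^ b * S0 ^ c * Hh2 ^ (c * b) :=
    pow_pow_central S0 S2 Hh2 hH2c e3
  have P1 : ∀ c d e a : ℕ, (S0 ^ c * (Hh1 ^ d * Hh2 ^ e)) * S1 ^ a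
      = S1 ^ a * (S0 ^ c * (Hh1 ^ (c * a + d) * Hh2 ^ e)) := by
    intro c d e a
    calc (S0 ^ c * (Hh1 ^ d * Hh2 ^ e)) * S1 ^ a
        = S0 ^ c * (Hh1 ^ d * (Hh2 ^ e * S1 ^ a)) := by simp only [mul_assoc]
      _ = S0 ^ c * (Hh1 ^ d * (S1 ^ a * Hh2 ^ e)) := by rw [(hcm21.pow_pow e a).eq]
      _ = S0 ^ c * (S1 ^ a * (Hh1 ^ d * Hh2 ^ e)) := by rw [mv_comm (hcm11.pow_pow d a)]
      _ = S1 ^ a * (S0 ^ c * (Hh1 ^ (c * a) * (Hh1 ^ d * Hh2 ^ e))) := by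
          rw [mvt (hm1 c a)]
      _ = S1 ^ a * (S0 ^ c * (Hh1 ^ (c * a + d) * Hh2 ^ e)) := by rw [pj]
  have P2 : ∀ c d e b : ℕ, (S0 ^ c * (Hh1 ^ d * Hh2 ^ e)) * S2 ^ b
      = S2 ^ b * (S0 ^ c * (Hh1 ^ d * Hh2 ^ (c * b + e))) := by
    intro c d e b
    calc (S0 ^ c * (Hh1 ^ d * Hh2 ^ e)) * S2 ^ b
        = S0 ^ c * (Hh1 ^ d * (Hh2 ^ e * S2 ^ b)) := by simp only [mul_assoc]
      _ = S0 ^ c * (Hh1 ^ d * (S2 ^ b * Hh2 ^ e)) := by rw [(hcm22.pow_pow e b).eq]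
      _ = S0 ^ c * (S2 ^ b * (Hh1 ^ d * Hh2 ^ e)) := by rw [mv_comm (hcm12.pow_pow d b)]
      _ = S2 ^ b * (S0 ^ c * (Hh2 ^ (c * b) * (Hh1 ^ d * Hh2 ^ e))) := by
          rw [mvt (hm2 c b)]
      _ = S2 ^ b * (S0 ^ c * (Hh1 ^ d * (Hh2 ^ (c * b) * Hh2 ^ e))) := by
          rw [mv_comm (hcm2H.pow_pow (c * b) d)]
      _ = S2 ^ b * (S0 ^ c * (Hh1 ^ d * Hh2 ^ (c * b + e))) := by rw [← pow_add]
  have mvNF1 : ∀ n ∈ NF, ∀ a : ℕ, ∃ n' ∈ NF, ∀ x : ExtC G,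
      n * (S1 ^ a * x) = S1 ^ a * (n' * x) := by
    rintro n ⟨c, d, e, rfl⟩ a
    refine ⟨S0 ^ c * (Hh1 ^ (c * a + d) * Hh2 ^ e), ⟨c, c * a + d, e, rfl⟩, fun x => ?_⟩
    rw [← mul_assoc, P1, mul_assoc]
  have mvNF2 : ∀ n ∈ NF, ∀ b : ℕ, ∃ n' ∈ NF, ∀ x : ExtC G,
      n * (S2 ^ b * x) = S2 ^ b * (n' * x) := by
    rintro n ⟨c, d, e, rfl⟩ b
    refine ⟨S0 ^ c * (Hh1 ^ d * Hh2 ^ (c * b + e)), ⟨c, d, c * b + e, rfl⟩, fun x => ?_⟩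
    rw [← mul_assoc, P2, mul_assoc]
  have e4c : ∀ x : ExtC G, S2 * (S1 * x) = S1 * (S2 * (S0⁻¹ * x)) := by
    intro x
    rw [← mul_assoc, e4]
    simp only [mul_assoc]
  have SWAP1 : ∀ b : ℕ, ∃ n ∈ NF, ∀ x : ExtC G,
      S2 ^ b * (S1 * x) = S1 * (S2 ^ b * (n * x)) := by
    intro b
    induction b with
    | zero => exact ⟨1, hNF1, fun x => by simp⟩
    | succ b ih =>
      obtain ⟨n, hn, hnx⟩ := ih
      obtain ⟨n2, hn2, hn2x⟩ := mvNF2 n hn 1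
      have hS0NF : S0 ^ (p - 1) ∈ NF := ⟨p - 1, 0, 0, by simp⟩
      refine ⟨n2 * S0 ^ (p - 1), hNFmul _ hn2 _ hS0NF, fun x => ?_⟩
      have hn2x' : ∀ y : ExtC G, n * (S2 * y) = S2 * (n2 * y) := by
        intro y
        have := hn2x y
        rwa [pow_one] at this
      calc S2 ^ (b + 1) * (S1 * x)
          = S2 ^ b * (S2 * (S1 * x)) := by rw [pow_succ]; simp only [mul_assoc]
        _ = S2 ^ b * (S1 * (S2 * (S0⁻¹ * x))) := by rw [e4c]
        _ = S1 * (S2 ^ b * (n * (S2 * (S0⁻¹ * x)))) := by rw [hnx]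
        _ = S1 * (S2 ^ b * (S2 * (n2 * (S0⁻¹ * x)))) := by rw [hn2x']
        _ = S1 * (S2 ^ (b + 1) * (n2 * (S0 ^ (p - 1) * x))) := by
            rw [hS0inv, ← mul_assoc (S2 ^ b) S2, ← pow_succ]
        _ = S1 * (S2 ^ (b + 1) * (n2 * S0 ^ (p - 1) * x)) := by simp only [mul_assoc]
  have SWAP : ∀ a b : ℕ, ∃ n ∈ NF, ∀ x : ExtC G,
      S2 ^ b * (S1 ^ a * x) = S1 ^ a * (S2 ^ b * (n * x)) := by
    intro a b
    induction a with
    | zero => exact ⟨1, hNF1, fun x => by simp⟩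
    | succ a ih =>
      obtain ⟨n, hn, hnx⟩ := ih
      obtain ⟨n1, hn1, hn1x⟩ := mvNF1 n hn 1
      obtain ⟨n4, hn4, hn4x⟩ := SWAP1 b
      refine ⟨n4 * n1, hNFmul _ hn4 _ hn1, fun x => ?_⟩
      have hn1x' : ∀ y : ExtC G, n * (S1 * y) = S1 * (n1 * y) := by
        intro y
        have := hn1x y
        rwa [pow_one] at this
      calc S2 ^ b * (S1 ^ (a + 1) * x)
          = S2 ^ b * (S1 ^ a * (S1 * x)) := by rw [pow_succ]; simp only [mul_assoc]
        _ = S1 ^ a * (S2 ^ b * (n * (S1 * x))) := by rw [hnx]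
        _ = S1 ^ a * (S2 ^ b * (S1 * (n1 * x))) := by rw [hn1x']
        _ = S1 ^ a * (S1 * (S2 ^ b * (n4 * (n1 * x)))) := by rw [hn4x]
        _ = S1 ^ (a + 1) * (S2 ^ b * (n4 * n1 * x)) := by
            rw [← mul_assoc (S1 ^ a) S1, ← pow_succ]
            simp only [mul_assoc]
  -- the subgroup U
  set U : Set (ExtC G) := {x | ∃ a b : ℕ, ∃ n ∈ NF, x = S1 ^ a * (S2 ^ b * n)} with hUdef
  have hNFsubU : ∀ n ∈ NF, n ∈ U := fun n hn => ⟨0, 0, n, hn, by simp⟩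
  have hU1 : (1 : ExtC G) ∈ U := hNFsubU 1 hNF1
  have hUmul : ∀ x ∈ U, ∀ y ∈ U, x * y ∈ U := by
    rintro x ⟨a, b, n, hn, rfl⟩ y ⟨a', b', n', hn', rfl⟩
    obtain ⟨n1, hn1, hn1x⟩ := mvNF1 n hn a'
    obtain ⟨n2, hn2, hn2x⟩ := mvNF2 n1 hn1 b'
    obtain ⟨n3, hn3, hn3x⟩ := SWAP a' b
    obtain ⟨n4, hn4, hn4x⟩ := mvNF2 n3 hn3 b'
    refine ⟨a + a', b + b', n4 * (n2 * n'), hNFmul _ hn4 _ (hNFmul _ hn2 _ hn'), ?_⟩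
    calc (S1 ^ a * (S2 ^ b * n)) * (S1 ^ a' * (S2 ^ b' * n'))
        = S1 ^ a * (S2 ^ b * (n * (S1 ^ a' * (S2 ^ b' * n')))) := by simp only [mul_assoc]
      _ = S1 ^ a * (S2 ^ b * (S1 ^ a' * (n1 * (S2 ^ b' * n')))) := by rw [hn1x]
      _ = S1 ^ a * (S2 ^ b * (S1 ^ a' * (S2 ^ b' * (n2 * n')))) := by rw [hn2x]
      _ = S1 ^ a * (S1 ^ a' * (S2 ^ b * (n3 * (S2 ^ b' * (n2 * n'))))) := by rw [hn3x]
      _ = S1 ^ a * (S1 ^ a' * (S2 ^ b * (S2 ^ b' * (n4 * (n2 * n'))))) := by rw [hn4x]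
      _ = S1 ^ (a + a') * (S2 ^ (b + b') * (n4 * (n2 * n'))) := by rw [pj, pj]
  have hTP2NF : TP2 ∈ NF := ⟨0, c1, d1, by rw [pow_zero, one_mul, hTP2def]⟩
  have hTP1NF : TP1 ∈ NF := ⟨0, a1, b1, by rw [pow_zero, one_mul, hTP1def]⟩
  have hS2binv : ∀ b : ℕ, (S2 ^ b)⁻¹ = S2 ^ (b * (p - 1)) * (TP2 ^ b)⁻¹ := by
    intro b
    apply inv_eq_of_mul_eq_one_right
    rw [← mul_assoc, ← pow_add, hexp2 b, pow_mul, hS2p]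
    exact mul_inv_cancel (TP2 ^ b)
  have hS1ainv : ∀ a : ℕ, (S1 ^ a)⁻¹ = S1 ^ (a * (p - 1)) * (TP1 ^ a)⁻¹ := by
    intro a
    apply inv_eq_of_mul_eq_one_right
    rw [← mul_assoc, ← pow_add, hexp2 a, pow_mul, hS1p]
    exact mul_inv_cancel (TP1 ^ a)
  have hUinv : ∀ x ∈ U, x⁻¹ ∈ U := by
    rintro x ⟨a, b, n, hn, rfl⟩
    have h1' : n⁻¹ ∈ U := hNFsubU _ (hNFinv _ hn)
    have h2' : (S2 ^ b)⁻¹ ∈ U := by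
      rw [hS2binv]
      exact ⟨0, b * (p - 1), (TP2 ^ b)⁻¹, hNFinv _ (hNFpow _ hTP2NF b), by
        rw [pow_zero, one_mul]⟩
    have h3' : (S1 ^ a)⁻¹ ∈ U := by
      rw [hS1ainv]
      exact ⟨a * (p - 1), 0, (TP1 ^ a)⁻¹, hNFinv _ (hNFpow _ hTP1NF a), by
        rw [pow_zero, one_mul]⟩
    have heq : (S1 ^ a * (S2 ^ b * n))⁻¹ = n⁻¹ * ((S2 ^ b)⁻¹ * (S1 ^ a)⁻¹) := by
      rw [mul_inv_rev, mul_inv_rev]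
      simp only [mul_assoc]
    rw [heq]
    exact hUmul _ h1' _ (hUmul _ h2' _ h3')
  set Usub : Subgroup (ExtC G) :=
    { carrier := U
      one_mem' := hU1
      mul_mem' := fun hx hy => hUmul _ hx _ hy
      inv_mem' := fun hx => hUinv _ hx } with hUsubdef
  have hS1U : S1 ∈ U := ⟨1, 0, 1, hNF1, by simp⟩
  have hS2U : S2 ∈ U := ⟨0, 1, 1, hNF1, by simp⟩
  have hS0U : S0 ∈ U := hNFsubU _ ⟨1, 0, 0, by simp⟩
  have hH1U : Hh1 ∈ U := hNFsubU _ ⟨0, 1, 0, by simp⟩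
  have hH2U : Hh2 ∈ U := hNFsubU _ ⟨0, 0, 1, by simp⟩
  have hmaptop : ∀ g : G, ∃ u ∈ U, πE u = g := by
    intro g
    have hle : Subgroup.closure {f1, f2, f0, h1, h2} ≤ Subgroup.map πE Usub := by
      rw [Subgroup.closure_le]
      rintro x hx
      simp only [Set.mem_insert_iff, Set.mem_singleton_iff] at hx
      rcases hx with rfl | rfl | rfl | rfl | rfl
      · exact ⟨S1, hS1U, by rw [hπ, hS1g]⟩
      · exact ⟨S2, hS2U, by rw [hπ, hS2g]⟩
      · exact ⟨S0, hS0U, by rw [hπ, hS0g]⟩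
      · exact ⟨Hh1, hH1U, by rw [hπ, hH1g]⟩
      · exact ⟨Hh2, hH2U, by rw [hπ, hH2g]⟩
    have hg : g ∈ Subgroup.map πE Usub := hle (by rw [hgen]; trivial)
    obtain ⟨u, hu, hu2⟩ := hg
    exact ⟨u, hu, hu2⟩
  -- reduction to bounded exponents
  have hredS1 : ∀ a : ℕ, S1 ^ a = S1 ^ (a % p) * TP1 ^ (a / p) := by
    intro a
    conv_lhs => rw [← Nat.mod_add_div a p]
    rw [pow_add, pow_mul, hS1p]
  have hredS2 : ∀ b : ℕ, S2 ^ b = S2 ^ (b % p) * TP2 ^ (b / p) := by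
    intro b
    conv_lhs => rw [← Nat.mod_add_div b p]
    rw [pow_add, pow_mul, hS2p]
  have hredpow : ∀ (y : ExtC G), y ^ p = 1 → ∀ c : ℕ, y ^ c = y ^ (c % p) := by
    intro y hy c
    conv_lhs => rw [← Nat.mod_add_div c p]
    rw [pow_add, pow_mul, hy, one_pow, mul_one]
  have hTP1c : ∀ w, TP1 * w = w * TP1 := by
    intro w
    rw [← hS1p]
    exact hS1pc w
  have hTP2c : ∀ w, TP2 * w = w * TP2 := by
    intro w
    rw [← hS2p]
    exact hS2pc w
  have hred : ∀ x ∈ U, ∃ t : Fin p × Fin p × Fin p × Fin p × Fin p,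
      x = S1 ^ (t.1 : ℕ) * (S2 ^ (t.2.1 : ℕ) *
        (S0 ^ (t.2.2.1 : ℕ) * (Hh1 ^ (t.2.2.2.1 : ℕ) * Hh2 ^ (t.2.2.2.2 : ℕ)))) := by
    rintro x ⟨a, b, n, hn, rfl⟩
    have hmem : TP1 ^ (a / p) * (TP2 ^ (b / p) * n) ∈ NF :=
      hNFmul _ (hNFpow _ hTP1NF _) _ (hNFmul _ (hNFpow _ hTP2NF _) _ hn)
    obtain ⟨c, d, e, hcde⟩ := hmem
    refine ⟨(⟨a % p, Nat.mod_lt _ hppos⟩, ⟨b % p, Nat.mod_lt _ hppos⟩,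
      ⟨c % p, Nat.mod_lt _ hppos⟩, ⟨d % p, Nat.mod_lt _ hppos⟩,
      ⟨e % p, Nat.mod_lt _ hppos⟩), ?_⟩
    have hstep : S1 ^ a * (S2 ^ b * n)
        = S1 ^ (a % p) * (S2 ^ (b % p) * (TP1 ^ (a / p) * (TP2 ^ (b / p) * n))) := by
      rw [hredS1, hredS2]
      have hc1' : Commute (TP1 ^ (a / p)) (S2 ^ (b % p)) :=
        Commute.pow_pow (show Commute TP1 S2 from hTP1c S2) _ _
      calc S1 ^ (a % p) * TP1 ^ (a / p) * (S2 ^ (b % p) * TP2 ^ (b / p) * n)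
          = S1 ^ (a % p) * (TP1 ^ (a / p) * (S2 ^ (b % p) * (TP2 ^ (b / p) * n))) := by
            simp only [mul_assoc]
        _ = S1 ^ (a % p) * (S2 ^ (b % p) * (TP1 ^ (a / p) * (TP2 ^ (b / p) * n))) := by
            rw [mv_comm hc1']
    rw [hstep, hcde]
    have h0 : S0 ^ c = S0 ^ (c % p) := hredpow S0 hS0p c
    have h1' : Hh1 ^ d = Hh1 ^ (d % p) := hredpow Hh1 hH1p d
    have h2' : Hh2 ^ e = Hh2 ^ (e % p) := hredpow Hh2 hH2p e
    rw [h0, h1', h2']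
  -- finiteness and cardinality
  have hUfin : U.Finite := by
    apply Set.Finite.subset (Set.finite_range (fun t : Fin p × Fin p × Fin p × Fin p × Fin p =>
      S1 ^ (t.1 : ℕ) * (S2 ^ (t.2.1 : ℕ) *
        (S0 ^ (t.2.2.1 : ℕ) * (Hh1 ^ (t.2.2.2.1 : ℕ) * Hh2 ^ (t.2.2.2.2 : ℕ))))))
    intro x hx
    obtain ⟨t, ht⟩ := hred x hx
    exact ⟨t, ht.symm⟩
  haveI hfinU : Finite ↥Usub := hUfin.to_subtype
  have hΦU : ∀ t : Fin p × Fin p × Fin p × Fin p × Fin p,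
      S1 ^ (t.1 : ℕ) * (S2 ^ (t.2.1 : ℕ) *
        (S0 ^ (t.2.2.1 : ℕ) * (Hh1 ^ (t.2.2.2.1 : ℕ) * Hh2 ^ (t.2.2.2.2 : ℕ)))) ∈ U :=
    fun t => ⟨_, _, _, ⟨_, _, _, rfl⟩, rfl⟩
  have hle5 : Nat.card ↥Usub ≤ p ^ 5 := by
    have hs : Function.Surjective (fun t : Fin p × Fin p × Fin p × Fin p × Fin p =>
        (⟨_, hΦU t⟩ : ↥Usub)) := by
      rintro ⟨x, hx⟩
      obtain ⟨t, ht⟩ := hred x hx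
      exact ⟨t, Subtype.ext ht.symm⟩
    have := Nat.card_le_card_of_surjective _ hs
    calc Nat.card ↥Usub ≤ Nat.card (Fin p × Fin p × Fin p × Fin p × Fin p) := this
      _ = p ^ 5 := by simp [Nat.card_prod]; ring
  set ρ : ↥Usub →* G := πE.comp Usub.subtype with hρdef
  have hρsurj : Function.Surjective ρ := by
    intro g
    obtain ⟨u, hu, hg⟩ := hmaptop g
    exact ⟨⟨u, hu⟩, hg⟩
  have hbij : Function.Bijective ρ := by
    rw [Nat.bijective_iff_surjective_and_card]
    refine ⟨hρsurj, ?_⟩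
    rw [hcard]
    refine le_antisymm hle5 ?_
    rw [← hcard]
    exact Nat.card_le_card_of_surjective ρ hρsurj
  set eqv : ↥Usub ≃* G := MulEquiv.ofBijective ρ hbij with heqvdef
  have hsecg : ∀ g : G, ((eqv.symm g : ↥Usub) : ExtC G).g = g := by
    intro g
    have h := eqv.apply_symm_apply g
    have h2 : eqv (eqv.symm g) = ((eqv.symm g : ↥Usub) : ExtC G).g := rfl
    rw [h2] at h
    exact h
  refine ⟨fun g => -(((eqv.symm g : ↥Usub) : ExtC G).a), fun g h => ?_⟩
  have hm := map_mul eqv.symm g h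
  have hcoe : ((eqv.symm (g * h) : ↥Usub) : ExtC G)
      = ((eqv.symm g : ↥Usub) : ExtC G) * ((eqv.symm h : ↥Usub) : ExtC G) := by
    rw [hm]; rfl
  have hval : ((eqv.symm (g * h) : ↥Usub) : ExtC G).a
      = ((eqv.symm g : ↥Usub) : ExtC G).a + ((eqv.symm h : ↥Usub) : ExtC G).a + f g h := by
    rw [hcoe, hmul]
    show _ + _ + f (((eqv.symm g : ↥Usub) : ExtC G)).g (((eqv.symm h : ↥Usub) : ExtC G)).g = _
    rw [hsecg, hsecg]
  dsimp only
  rw [hval]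
  abel

end Key


/-- Let `p` be an odd prime and `G` a group of order `p⁵` in the isoclinism family `Φ₆`:
generated by `f1, f2, f0, h1, h2` with `Z(G) = ⟨h1, h2⟩`, relations `[f1,f2] = f0`,
`[f0,f1] = h1`, `[f0,f2] = h2`, `f0^p = h1^p = h2^p = 1`, and `f1^p, f2^p ∈ ⟨h1, h2⟩`.
Then `B₀(G) = 0`. -/
theorem B0_phi6_eq_bot (p : ℕ) (hp : p.Prime) (hodd : Odd p)
    (G : Type) [Group G] [Finite G] (hcard : Nat.card G = p ^ 5)
    (f1 f2 f0 h1 h2 : G)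
    (hgen : Subgroup.closure {f1, f2, f0, h1, h2} = ⊤)
    (hcen : Subgroup.closure {h1, h2} = Subgroup.center G)
    (r1 : cmt f1 f2 = f0) (r2 : cmt f0 f1 = h1) (r3 : cmt f0 f2 = h2)
    (r4 : f0 ^ p = 1) (r5 : h1 ^ p = 1) (r6 : h2 ^ p = 1)
    (r7 : f1 ^ p ∈ Subgroup.closure ({h1, h2} : Set G))
    (r8 : f2 ^ p ∈ Subgroup.closure ({h1, h2} : Set G)) :
    B0 G = ⊥ := by
  rw [AddSubgroup.eq_bot_iff_forall]
  intro x hx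
  obtain ⟨F, rfl, hres⟩ := hx
  rw [QuotientAddGroup.eq_zero_iff]
  show IsGrpCoboundary (F : G → G → QZ)
  set f : G → G → QZ := (F : G → G → QZ) with hfdef
  have hfc : IsGrpCocycle f := F.2
  have h1g : ∀ g : G, f 1 g = f 1 1 := by
    intro g
    have h := hfc 1 1 g
    rw [one_mul, one_mul] at h
    rw [add_comm (f 1 1)] at h
    exact (add_left_cancel h).symm
  have hg1 : ∀ g : G, f g 1 = f 1 1 := by
    intro g
    have h := hfc g 1 1
    rw [mul_one, one_mul] at h
    exact add_right_cancel h
  set f' : G → G → QZ := fun g h => f g h - f 1 1 with hf'def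
  have hf'c : IsGrpCocycle f' := by
    intro g h k
    show (f g h - f 1 1) + (f (g * h) k - f 1 1) = (f h k - f 1 1) + (f g (h * k) - f 1 1)
    rw [sub_add_sub_comm, sub_add_sub_comm, hfc g h k]
  have hn1 : ∀ y : G, f' 1 y = 0 := fun y => by
    show f 1 y - f 1 1 = 0
    rw [h1g y, sub_self]
  have hn2 : ∀ y : G, f' y 1 = 0 := fun y => by
    show f y 1 - f 1 1 = 0
    rw [hg1 y, sub_self]
  have hsymf : ∀ z y : G, (∀ w, z * w = w * z) → z ^ p = 1 → f' z y = f' y z := by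
    intro z y hzc hzp
    have hbc := bicyclic_aux hp z y (hzc y) hzp
    obtain ⟨cc, hcc⟩ := hres _ hbc
    have hzm : z ∈ Subgroup.closure ({z, y} : Set G) :=
      Subgroup.subset_closure (Set.mem_insert _ _)
    have hym : y ∈ Subgroup.closure ({z, y} : Set G) :=
      Subgroup.subset_closure (Set.mem_insert_of_mem _ rfl)
    have hv1 := hcc ⟨z, hzm⟩ ⟨y, hym⟩
    have hv2 := hcc ⟨y, hym⟩ ⟨z, hzm⟩
    have hcm : (⟨z, hzm⟩ * ⟨y, hym⟩ : Subgroup.closure ({z, y} : Set G))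
        = ⟨y, hym⟩ * ⟨z, hzm⟩ := Subtype.ext (hzc y)
    dsimp only at hv1 hv2
    show f z y - f 1 1 = f y z - f 1 1
    rw [show f z y = f y z from by rw [hcm] at hv1; rw [hv1, hv2]; abel]
  have hcb := key hp hodd hcard f1 f2 f0 h1 h2 hgen hcen r1 r2 r3 r4 r5 r6 r7 r8
    f' hf'c hn1 hn2 hsymf
  obtain ⟨cc, hcc⟩ := hcb
  refine ⟨fun g => cc g + f 1 1, fun g h => ?_⟩
  have hgh := hcc g h
  have h' : f g h = cc g + cc h - cc (g * h) + f 1 1 := by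
    rw [← hgh]
    show f g h = f g h - f 1 1 + f 1 1
    abel
  show f g h = (cc g + f 1 1) + (cc h + f 1 1) - (cc (g * h) + f 1 1)
  rw [h']
  abel
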